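/- arXiv:2106.15929 — 2 statements merged into one kernel-verified Lean document; each statement's English description precedes it below -/
import Mathlib

section
/- Let H : ℝⁿ ⇉ ℝⁿ be a convex process and K ⊆ ℝⁿ a convex cone such that K − dom(H) is a linear subspace. If K is strongly H invariant, then the negative polar cone K⁻ is weakly H⁻ invariant. -/
open Pointwise Set RealInnerProductSpace

namespace ConvexProcessPaper

/-- A convex cone: a nonempty convex set closed under nonnegative scalar multiplication. -/
def IsConvexCone {V : Type*} [AddCommMonoid V] [Module ℝ V] (S : Set V) : Prop :=
  S.Nonempty ∧ Convex ℝ S ∧ ∀ c : ℝ, 0 ≤ c → ∀ x ∈ S, c • x ∈ S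

/-- A set is a linear subspace. -/
def IsLinearSubspace {V : Type*} [AddCommGroup V] [Module ℝ V] (S : Set V) : Prop :=
  ∃ W : Submodule ℝ V, (W : Set V) = S

/-- Set-valued maps from ℝⁿ to ℝⁿ. -/
abbrev SVMap (n : ℕ) := EuclideanSpace ℝ (Fin n) → Set (EuclideanSpace ℝ (Fin n))

variable {n : ℕ}

/-- The graph of a set-valued map. -/
def graph (H : SVMap n) : Set (EuclideanSpace ℝ (Fin n) × EuclideanSpace ℝ (Fin n)) :=
  {p | p.2 ∈ H p.1}

/-- A convex process: a set-valued map whose graph is a convex cone. -/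
def IsConvexProcess (H : SVMap n) : Prop := IsConvexCone (graph H)

/-- The domain of a set-valued map. -/
def dom (H : SVMap n) : Set (EuclideanSpace ℝ (Fin n)) := {x | (H x).Nonempty}

/-- The image of a set-valued map. -/
def im (H : SVMap n) : Set (EuclideanSpace ℝ (Fin n)) := {y | ∃ x, y ∈ H x}

/-- The inverse of a set-valued map: gr(H⁻¹) = {(y,x) : (x,y) ∈ gr(H)}. -/
def invMap (H : SVMap n) : SVMap n := fun y => {x | y ∈ H x}

/-- The image of a set under a set-valued map: H(S) = ⋃_{x ∈ S} H(x). -/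
def imSet (H : SVMap n) (S : Set (EuclideanSpace ℝ (Fin n))) :
    Set (EuclideanSpace ℝ (Fin n)) := ⋃ x ∈ S, H x

/-- The reachable set: R(H) = ⋃_{ℓ ≥ 0} H^ℓ({0}). -/
def reach (H : SVMap n) : Set (EuclideanSpace ℝ (Fin n)) := ⋃ ℓ : ℕ, (imSet H)^[ℓ] {0}

/-- The null-controllable set: N(H) = R(H⁻¹). -/
def nullc (H : SVMap n) : Set (EuclideanSpace ℝ (Fin n)) := reach (invMap H)

/-- The feasible set: states from which an infinite trajectory emanates. -/
def feas (H : SVMap n) : Set (EuclideanSpace ℝ (Fin n)) :=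
  {ξ | ∃ x : ℕ → EuclideanSpace ℝ (Fin n), x 0 = ξ ∧ ∀ k, x (k + 1) ∈ H (x k)}

/-- The minimal linear process L₋: gr(L₋) = lin(gr(H)) = gr(H) ∩ (−gr(H)). -/
def Lminus (H : SVMap n) : SVMap n := fun x => {y | y ∈ H x ∧ -y ∈ H (-x)}

/-- The maximal linear process L₊: gr(L₊) = Lin(gr(H)) = gr(H) − gr(H). -/
def Lplus (H : SVMap n) : SVMap n :=
  fun x => {y | ∃ x₁ y₁ x₂ y₂, y₁ ∈ H x₁ ∧ y₂ ∈ H x₂ ∧ x = x₁ - x₂ ∧ y = y₁ - y₂}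

/-- The negative dual process: p ∈ H⁻(q) ⇔ ⟨p,x⟩ ≥ ⟨q,y⟩ for all (x,y) ∈ gr(H). -/
def negDual (H : SVMap n) : SVMap n :=
  fun q => {p | ∀ x y, y ∈ H x → ⟪q, y⟫ ≤ ⟪p, x⟫}

/-- The positive dual process: p ∈ H⁺(q) ⇔ ⟨p,x⟩ ≤ ⟨q,y⟩ for all (x,y) ∈ gr(H). -/
def posDual (H : SVMap n) : SVMap n :=
  fun q => {p | ∀ x y, y ∈ H x → ⟪p, x⟫ ≤ ⟪q, y⟫}

/-- The negative polar cone of a set. -/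
def negPolar (C : Set (EuclideanSpace ℝ (Fin n))) : Set (EuclideanSpace ℝ (Fin n)) :=
  {y | ∀ x ∈ C, ⟪x, y⟫ ≤ 0}

/-- The positive polar cone of a set. -/
def posPolar (C : Set (EuclideanSpace ℝ (Fin n))) : Set (EuclideanSpace ℝ (Fin n)) :=
  {y | ∀ x ∈ C, 0 ≤ ⟪x, y⟫}

/-- C is weakly H invariant: H(x) ∩ C ≠ ∅ for all x ∈ C. -/
def WeaklyInv (H : SVMap n) (C : Set (EuclideanSpace ℝ (Fin n))) : Prop :=
  ∀ x ∈ C, (H x ∩ C).Nonempty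

/-- C is strongly H invariant: H(x) ⊆ C for all x ∈ C. -/
def StronglyInv (H : SVMap n) (C : Set (EuclideanSpace ℝ (Fin n))) : Prop :=
  ∀ x ∈ C, H x ⊆ C

/-- H is reachable: every feasible state is reachable. -/
def IsReachable (H : SVMap n) : Prop := feas H ⊆ reach H

/-- H is null-controllable: every feasible state is null-controllable. -/
def IsNullControllable (H : SVMap n) : Prop := feas H ⊆ nullc H

/-- auxiliary: a convex cone contains 0. -/
lemma IsConvexCone.zero_mem' {V : Type*} [AddCommMonoid V] [Module ℝ V] {S : Set V}
    (hS : IsConvexCone S) : (0 : V) ∈ S := by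
  obtain ⟨⟨x, hx⟩, _, hsmul⟩ := hS
  simpa using hsmul 0 le_rfl x hx

/-- auxiliary: a convex cone is closed under addition. -/
lemma IsConvexCone.add_mem' {V : Type*} [AddCommMonoid V] [Module ℝ V] {S : Set V}
    (hS : IsConvexCone S) {a b : V} (ha : a ∈ S) (hb : b ∈ S) : a + b ∈ S := by
  obtain ⟨_, hconv, hsmul⟩ := hS
  have h := hconv ha hb (by norm_num : (0:ℝ) ≤ 1/2) (by norm_num : (0:ℝ) ≤ 1/2) (by norm_num)
  have h2 := hsmul 2 (by norm_num) _ h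
  have : (2:ℝ) • ((1/2 : ℝ) • a + (1/2 : ℝ) • b) = a + b := by
    rw [smul_add, smul_smul, smul_smul]; norm_num
  rwa [this] at h2

/-- strong invariance of K implies weak H⁻ invariance of K⁻. -/
theorem strongInv_to_weakInv_dual {n : ℕ} (H : SVMap n) (hH : IsConvexProcess H)
    (K : Set (EuclideanSpace ℝ (Fin n))) (hK : IsConvexCone K)
    (hsub : IsLinearSubspace (K - dom H))
    (hstrong : StronglyInv H K) :
    WeaklyInv (negDual H) (negPolar K) := by
  intro q hq
  obtain ⟨W, hW⟩ := hsub
  classical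
  have h0K : (0 : EuclideanSpace ℝ (Fin n)) ∈ K := hK.zero_mem'
  have h0H : (0 : EuclideanSpace ℝ (Fin n)) ∈ H 0 := by
    have := hH.zero_mem'
    simpa [graph] using this
  -- graph and cone arithmetic
  have hHadd : ∀ {x y x' y' : EuclideanSpace ℝ (Fin n)},
      y ∈ H x → y' ∈ H x' → y + y' ∈ H (x + x') := by
    intro x y x' y' h1 h2
    have := hH.add_mem' (a := (x, y)) (b := (x', y')) h1 h2
    simpa [graph] using this
  have hHsmul : ∀ {c : ℝ}, 0 ≤ c → ∀ {x y : EuclideanSpace ℝ (Fin n)},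
      y ∈ H x → c • y ∈ H (c • x) := by
    intro c hc x y h1
    have := hH.2.2 c hc (x, y) h1
    simpa [graph] using this
  have hKadd : ∀ {a b}, a ∈ K → b ∈ K → a + b ∈ K := fun ha hb => hK.add_mem' ha hb
  have hKsmul : ∀ {c : ℝ}, 0 ≤ c → ∀ {a}, a ∈ K → c • a ∈ K := fun hc _ ha => hK.2.2 _ hc _ ha
  -- key inequality from strong invariance and q ∈ K⁻
  have key : ∀ {x y k x' y' k' : EuclideanSpace ℝ (Fin n)}, y ∈ H x → k ∈ K → y' ∈ H x' →
      k' ∈ K → (k - x) + (k' - x') = 0 → ⟪q, y⟫ + ⟪q, y'⟫ ≤ 0 := by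
    intro x y k x' y' k' hy hk hy' hk' hsum
    have hxx : x + x' = k + k' := by
      rw [sub_add_sub_comm] at hsum
      exact (sub_eq_zero.mp hsum).symm
    have hxK : x + x' ∈ K := hxx ▸ hKadd hk hk'
    have hyK : y + y' ∈ K := hstrong _ hxK (hHadd hy hy')
    have := hq _ hyK
    rw [real_inner_comm] at this
    rwa [inner_add_right] at this
  -- the set S w and its infimum N
  set S : EuclideanSpace ℝ (Fin n) → Set ℝ := fun w =>
    {r | ∃ x y k, y ∈ H x ∧ k ∈ K ∧ k - x = w ∧ r = -⟪q, y⟫} with hSdef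
  have hWmem : ∀ z ∈ W, ∃ k ∈ K, ∃ x, (∃ y, y ∈ H x) ∧ k - x = z := by
    intro z hz
    have : z ∈ K - dom H := hW ▸ hz
    obtain ⟨k, hk, x, hx, hkx⟩ := Set.mem_sub.mp this
    exact ⟨k, hk, x, hx, hkx⟩
  have hSne : ∀ z ∈ W, (S z).Nonempty := by
    intro z hz
    obtain ⟨k, hk, x, ⟨y, hy⟩, hkx⟩ := hWmem z hz
    exact ⟨-⟪q, y⟫, x, y, k, hy, hk, hkx, rfl⟩
  have hSbdd : ∀ z ∈ W, BddBelow (S z) := by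
    intro z hz
    have hz' : -z ∈ W := W.neg_mem hz
    obtain ⟨k', hk', x', ⟨y', hy'⟩, hkx'⟩ := hWmem _ hz'
    refine ⟨⟪q, y'⟫, ?_⟩
    rintro r ⟨x, y, k, hy, hk, hkx, rfl⟩
    have hsum : (k - x) + (k' - x') = 0 := by rw [hkx, hkx']; abel
    have := key hy hk hy' hk' hsum
    linarith
  set N : W → ℝ := fun w => sInf (S (w : EuclideanSpace ℝ (Fin n))) with hNdef
  have hNle : ∀ (w : W) (r : ℝ), r ∈ S (w : EuclideanSpace ℝ (Fin n)) → N w ≤ r :=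
    fun w r hr => csInf_le (hSbdd _ w.2) hr
  have hNge : ∀ (w : W) (b : ℝ), (∀ r ∈ S (w : EuclideanSpace ℝ (Fin n)), b ≤ r) → b ≤ N w :=
    fun w b hb => le_csInf (hSne _ w.2) hb
  -- S is additive and positively homogeneous
  have hSadd : ∀ z z' r r', r ∈ S z → r' ∈ S z' → r + r' ∈ S (z + z') := by
    rintro z z' r r' ⟨x, y, k, hy, hk, hkx, rfl⟩ ⟨x', y', k', hy', hk', hkx', rfl⟩
    refine ⟨x + x', y + y', k + k', hHadd hy hy', hKadd hk hk', ?_, ?_⟩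
    · rw [← hkx, ← hkx']; abel
    · rw [inner_add_right]; ring
  have hSsmul : ∀ (c : ℝ), 0 ≤ c → ∀ z r, r ∈ S z → c * r ∈ S (c • z) := by
    rintro c hc z r ⟨x, y, k, hy, hk, hkx, rfl⟩
    refine ⟨c • x, c • y, c • k, hHsmul hc hy, hKsmul hc hk, ?_, ?_⟩
    · rw [← hkx, smul_sub]
    · rw [inner_smul_right]; ring
  have N_add : ∀ w w' : W, N (w + w') ≤ N w + N w' := by
    intro w w'
    have h1 : ∀ r ∈ S (w : EuclideanSpace ℝ (Fin n)),
        N (w + w') - r ≤ N w' := by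
      intro r hr
      refine sub_le_iff_le_add.mpr ?_
      have h2 : ∀ r' ∈ S (w' : EuclideanSpace ℝ (Fin n)), N (w + w') - r ≤ r' := by
        intro r' hr'
        have := hNle (w + w') (r + r') (by
          have := hSadd _ _ _ _ hr hr'
          simpa using this)
        linarith
      have := hNge w' _ h2
      linarith
    have h3 : ∀ r ∈ S (w : EuclideanSpace ℝ (Fin n)), N (w + w') - N w' ≤ r :=
      fun r hr => by have := h1 r hr; linarith
    have := hNge w _ h3
    linarith
  have N_hom_le : ∀ (c : ℝ), 0 < c → ∀ w : W, N (c • w) ≤ c * N w := by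
    intro c hc w
    have h2 : ∀ r ∈ S (w : EuclideanSpace ℝ (Fin n)), N (c • w) / c ≤ r := by
      intro r hr
      have := hNle (c • w) (c * r) (by
        have := hSsmul c hc.le _ _ hr
        simpa using this)
      rw [div_le_iff₀ hc] at *
      linarith [this]
    have := hNge w _ h2
    rw [div_le_iff₀ hc] at this
    linarith
  have N_hom : ∀ (c : ℝ), 0 < c → ∀ w : W, N (c • w) = c * N w := by
    intro c hc w
    refine le_antisymm (N_hom_le c hc w) ?_
    have := N_hom_le c⁻¹ (by positivity) (c • w)
    rw [inv_smul_smul₀ hc.ne'] at this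
    have h := mul_le_mul_of_nonneg_left this hc.le
    rw [← mul_assoc, mul_inv_cancel₀ hc.ne', one_mul] at h
    exact h
  have N0 : (0 : ℝ) ≤ N 0 := by
    refine hNge 0 0 ?_
    rintro r hr
    simp only [ZeroMemClass.coe_zero] at hr
    obtain ⟨x, y, k, hy, hk, hkx, rfl⟩ := hr
    have hsum : (k - x) + ((0:EuclideanSpace ℝ (Fin n)) - 0) = 0 := by rw [hkx]; abel
    have := key hy hk h0H h0K hsum
    rw [inner_zero_right] at this
    linarith
  -- Hahn-Banach on W
  obtain ⟨g, -, hgle⟩ := exists_extension_of_le_sublinear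
    (⟨⊥, 0⟩ : (W : Type _) →ₗ.[ℝ] ℝ) N N_hom N_add (by
      rintro ⟨x, hx⟩
      have hx0 : x = 0 := by simpa using hx
      subst hx0
      simpa using N0)
  -- extend to the whole space via orthogonal projection and take Riesz representative
  set φ : EuclideanSpace ℝ (Fin n) →ₗ[ℝ] ℝ :=
    g.comp (W.orthogonalProjectionOnto).toLinearMap with hφdef
  set p : EuclideanSpace ℝ (Fin n) :=
    (InnerProductSpace.toDual ℝ (EuclideanSpace ℝ (Fin n))).symm
      (LinearMap.toContinuousLinearMap φ) with hpdef
  have hpval : ∀ w : W, ⟪p, (w : EuclideanSpace ℝ (Fin n))⟫ = g w := by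
    intro w
    rw [hpdef, InnerProductSpace.toDual_symm_apply]
    show φ (w : EuclideanSpace ℝ (Fin n)) = g w
    rw [hφdef]
    simp [Submodule.orthogonalProjectionOnto_mem_subspace_eq_self]
  have hpkey : ∀ (w : W) (r : ℝ), r ∈ S (w : EuclideanSpace ℝ (Fin n)) →
      ⟪p, (w : EuclideanSpace ℝ (Fin n))⟫ ≤ r := by
    intro w r hr
    rw [hpval w]
    exact le_trans (hgle w) (hNle w r hr)
  -- conclude
  refine ⟨p, ?_, ?_⟩
  · -- p ∈ negDual H q
    intro x y hy
    have hxW : -x ∈ W := by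
      have : (0:EuclideanSpace ℝ (Fin n)) - x ∈ K - dom H :=
        Set.sub_mem_sub h0K ⟨y, hy⟩
      rw [zero_sub] at this
      show -x ∈ (W : Set (EuclideanSpace ℝ (Fin n)))
      rw [hW]; exact this
    have hr : -⟪q, y⟫ ∈ S ((⟨-x, hxW⟩ : W) : EuclideanSpace ℝ (Fin n)) :=
      ⟨x, y, 0, hy, h0K, by simp, rfl⟩
    have := hpkey ⟨-x, hxW⟩ _ hr
    rw [inner_neg_right] at this
    linarith
  · -- p ∈ negPolar K
    intro k hk
    have hkW : k ∈ W := by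
      have : k - (0:EuclideanSpace ℝ (Fin n)) ∈ K - dom H :=
        Set.sub_mem_sub hk ⟨0, h0H⟩
      rw [sub_zero] at this
      show k ∈ (W : Set (EuclideanSpace ℝ (Fin n)))
      rw [hW]; exact this
    have hr : (0:ℝ) ∈ S ((⟨k, hkW⟩ : W) : EuclideanSpace ℝ (Fin n)) :=
      ⟨0, 0, k, h0H, hk, by simp, by simp⟩
    have := hpkey ⟨k, hkW⟩ _ hr
    rw [real_inner_comm]
    simpa using this

end ConvexProcessPaper
end

section
/- Let H : ℝⁿ ⇉ ℝⁿ be a convex process such that dom(H) + R₋ = ℝⁿ, where R₋ is the reachable set of the minimal linear process L₋ associated with H. Then H is reachable if and only if R(H) = ℝⁿ. -/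
open Pointwise Set RealInnerProductSpace

namespace ConvexProcessPaper

variable {n : ℕ}

section Aux

variable {n : ℕ}

lemma graph_add {H : SVMap n} (hH : IsConvexProcess H)
    {a b : EuclideanSpace ℝ (Fin n) × EuclideanSpace ℝ (Fin n)}
    (ha : a ∈ graph H) (hb : b ∈ graph H) : a + b ∈ graph H := by
  obtain ⟨hne, hconv, hcone⟩ := hH
  have hmid : (1/2 : ℝ) • a + (1/2 : ℝ) • b ∈ graph H :=
    hconv ha hb (by norm_num) (by norm_num) (by norm_num)
  have h2 := hcone 2 (by norm_num) _ hmid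
  have : (2:ℝ) • ((1/2 : ℝ) • a + (1/2 : ℝ) • b) = a + b := by
    rw [smul_add, smul_smul, smul_smul]; norm_num
  rwa [this] at h2

lemma zero_mem_graph {H : SVMap n} (hH : IsConvexProcess H) :
    ((0 : EuclideanSpace ℝ (Fin n)), (0 : EuclideanSpace ℝ (Fin n))) ∈ graph H := by
  obtain ⟨⟨p, hp⟩, -, hcone⟩ := hH
  have h := hcone 0 le_rfl p hp
  rwa [zero_smul] at h

lemma zero_mem_H_zero {H : SVMap n} (hH : IsConvexProcess H) :
    (0 : EuclideanSpace ℝ (Fin n)) ∈ H 0 := zero_mem_graph hH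

lemma mem_H_add {H : SVMap n} (hH : IsConvexProcess H) {x y u v : EuclideanSpace ℝ (Fin n)}
    (h1 : y ∈ H x) (h2 : v ∈ H u) : y + v ∈ H (x + u) :=
  graph_add hH (a := (x, y)) (b := (u, v)) h1 h2

lemma graph_smul {H : SVMap n} (hH : IsConvexProcess H) {x y : EuclideanSpace ℝ (Fin n)}
    {c : ℝ} (hc : 0 ≤ c) (h : y ∈ H x) : c • y ∈ H (c • x) :=
  hH.2.2 c hc (x, y) h

lemma zero_mem_Lminus {H : SVMap n} (hH : IsConvexProcess H) :
    (0 : EuclideanSpace ℝ (Fin n)) ∈ Lminus H 0 :=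
  ⟨zero_mem_H_zero hH, by simpa using zero_mem_H_zero hH⟩

lemma Lminus_add {H : SVMap n} (hH : IsConvexProcess H) {x y u v : EuclideanSpace ℝ (Fin n)}
    (h1 : y ∈ Lminus H x) (h2 : v ∈ Lminus H u) : y + v ∈ Lminus H (x + u) :=
  ⟨mem_H_add hH h1.1 h2.1, by simpa [neg_add] using mem_H_add hH h2.2 h1.2⟩

lemma Lminus_smul {H : SVMap n} (hH : IsConvexProcess H) (c : ℝ)
    {x y : EuclideanSpace ℝ (Fin n)} (h : y ∈ Lminus H x) : c • y ∈ Lminus H (c • x) := by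
  rcases le_or_gt 0 c with hc | hc
  · refine ⟨graph_smul hH hc h.1, ?_⟩
    have := graph_smul hH hc h.2
    simpa [smul_neg] using this
  · constructor
    · have := graph_smul hH (by linarith : (0:ℝ) ≤ -c) h.2
      simpa [smul_neg, neg_smul, neg_neg] using this
    · have := graph_smul hH (by linarith : (0:ℝ) ≤ -c) h.1
      simpa [neg_smul] using this

/-- The graph of L₋ as a submodule. -/
def linSubmodule {H : SVMap n} (hH : IsConvexProcess H) :
    Submodule ℝ (EuclideanSpace ℝ (Fin n) × EuclideanSpace ℝ (Fin n)) where
  carrier := graph (Lminus H)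
  zero_mem' := zero_mem_Lminus hH
  add_mem' := fun ha hb => Lminus_add hH ha hb
  smul_mem' := fun c _ ha => Lminus_smul hH c ha

lemma mem_linSubmodule {H : SVMap n} (hH : IsConvexProcess H)
    {p : EuclideanSpace ℝ (Fin n) × EuclideanSpace ℝ (Fin n)} :
    p ∈ linSubmodule hH ↔ p.2 ∈ Lminus H p.1 := Iff.rfl

lemma mem_imSet_iff {F : SVMap n} {S : Set (EuclideanSpace ℝ (Fin n))}
    {y : EuclideanSpace ℝ (Fin n)} : y ∈ imSet F S ↔ ∃ x ∈ S, y ∈ F x := by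
  simp [imSet]

lemma imSet_mono {F : SVMap n} {S T : Set (EuclideanSpace ℝ (Fin n))} (h : S ⊆ T) :
    imSet F S ⊆ imSet F T := by
  intro y hy
  obtain ⟨x, hx, hyx⟩ := mem_imSet_iff.mp hy
  exact mem_imSet_iff.mpr ⟨x, h hx, hyx⟩

lemma iterate_zero_subset_succ {F : SVMap n} (h0 : (0 : EuclideanSpace ℝ (Fin n)) ∈ F 0) :
    ∀ ℓ, (imSet F)^[ℓ] ({0} : Set (EuclideanSpace ℝ (Fin n))) ⊆ (imSet F)^[ℓ+1] {0} := by
  intro ℓ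
  induction ℓ with
  | zero =>
      intro y hy
      simp only [Function.iterate_zero_apply, Set.mem_singleton_iff] at hy
      subst hy
      exact mem_imSet_iff.mpr ⟨0, rfl, h0⟩
  | succ k ih =>
      rw [Function.iterate_succ_apply', Function.iterate_succ_apply']
      exact imSet_mono ih

lemma iterate_subset_of_le {F : SVMap n} (h0 : (0 : EuclideanSpace ℝ (Fin n)) ∈ F 0)
    {ℓ m : ℕ} (h : ℓ ≤ m) :
    (imSet F)^[ℓ] ({0} : Set (EuclideanSpace ℝ (Fin n))) ⊆ (imSet F)^[m] {0} := by
  induction h with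
  | refl => exact subset_rfl
  | step _ ih => exact ih.trans (iterate_zero_subset_succ h0 _)

lemma mem_reach_iff {F : SVMap n} {x : EuclideanSpace ℝ (Fin n)} :
    x ∈ reach F ↔ ∃ ℓ, x ∈ (imSet F)^[ℓ] ({0} : Set (EuclideanSpace ℝ (Fin n))) :=
  Set.mem_iUnion

lemma iterate_add_lin {H : SVMap n} (hH : IsConvexProcess H) :
    ∀ ℓ, ∀ x ∈ (imSet H)^[ℓ] ({0} : Set (EuclideanSpace ℝ (Fin n))),
      ∀ r ∈ (imSet (Lminus H))^[ℓ] ({0} : Set (EuclideanSpace ℝ (Fin n))),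
      x + r ∈ (imSet H)^[ℓ] ({0} : Set (EuclideanSpace ℝ (Fin n))) := by
  intro ℓ
  induction ℓ with
  | zero =>
      intro x hx r hr
      simp only [Function.iterate_zero_apply, Set.mem_singleton_iff] at hx hr ⊢
      simp [hx, hr]
  | succ k ih =>
      intro x hx r hr
      rw [Function.iterate_succ_apply'] at hx hr ⊢
      obtain ⟨x', hx', hxx⟩ := mem_imSet_iff.mp hx
      obtain ⟨r', hr', hrr⟩ := mem_imSet_iff.mp hr
      exact mem_imSet_iff.mpr ⟨x' + r', ih x' hx' r' hr', mem_H_add hH hxx hrr.1⟩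

lemma exists_chain {F : SVMap n} : ∀ (N : ℕ) (r : EuclideanSpace ℝ (Fin n)),
    r ∈ (imSet F)^[N] ({0} : Set (EuclideanSpace ℝ (Fin n))) →
    ∃ z : ℕ → EuclideanSpace ℝ (Fin n), z 0 = 0 ∧ z N = r ∧ ∀ t < N, z (t+1) ∈ F (z t) := by
  intro N
  induction N with
  | zero =>
      intro r hr
      simp only [Function.iterate_zero_apply, Set.mem_singleton_iff] at hr
      subst hr
      exact ⟨fun _ => 0, rfl, rfl, fun t ht => absurd ht (Nat.not_lt_zero t)⟩
  | succ k ih =>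
      intro r hr
      rw [Function.iterate_succ_apply'] at hr
      obtain ⟨x, hx, hrx⟩ := mem_imSet_iff.mp hr
      obtain ⟨z, hz0, hzk, hzs⟩ := ih x hx
      refine ⟨fun t => if t ≤ k then z t else r, by simp [hz0], by simp, ?_⟩
      intro t ht
      rcases Nat.lt_or_ge t k with h | h
      · simpa [Nat.succ_le_of_lt h, le_of_lt h] using hzs t h
      · have htk : t = k := by omega
        subst htk
        simp only [show ¬ (t + 1 ≤ t) by omega, if_neg, if_pos (le_refl t), le_refl, if_true,
          reduceIte]
        simpa [hzk] using hrx

lemma chain_mem_iterate {F : SVMap n} {z : ℕ → EuclideanSpace ℝ (Fin n)} {N : ℕ}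
    (hz0 : z 0 = 0) (hzs : ∀ t < N, z (t+1) ∈ F (z t)) :
    ∀ t ≤ N, z t ∈ (imSet F)^[t] ({0} : Set (EuclideanSpace ℝ (Fin n))) := by
  intro t
  induction t with
  | zero => intro _; simp [hz0]
  | succ k ih =>
      intro h
      rw [Function.iterate_succ_apply']
      exact mem_imSet_iff.mpr ⟨z k, ih (by omega), hzs k (by omega)⟩

lemma exists_stab {H : SVMap n} (hH : IsConvexProcess H) :
    ∃ N : ℕ, 1 ≤ N ∧
      reach (Lminus H) = (imSet (Lminus H))^[N] ({0} : Set (EuclideanSpace ℝ (Fin n))) ∧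
      ∃ W : Submodule ℝ (EuclideanSpace ℝ (Fin n)), (W : Set _) = reach (Lminus H) := by
  have h0 : (0 : EuclideanSpace ℝ (Fin n)) ∈ Lminus H 0 := zero_mem_Lminus hH
  have hsub : ∀ ℓ : ℕ, ∃ W : Submodule ℝ (EuclideanSpace ℝ (Fin n)),
      (W : Set _) = (imSet (Lminus H))^[ℓ] ({0} : Set _) := by
    intro ℓ
    induction ℓ with
    | zero => exact ⟨⊥, by simp⟩
    | succ k ih =>
        obtain ⟨U, hU⟩ := ih
        refine ⟨{ carrier := (imSet (Lminus H))^[k+1] ({0} : Set _),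
                  zero_mem' := ?_, add_mem' := ?_, smul_mem' := ?_ }, rfl⟩
        · intro p q hp hq
          show p + q ∈ (imSet (Lminus H))^[k+1] ({0} : Set _)
          replace hp : p ∈ (imSet (Lminus H))^[k+1] ({0} : Set _) := hp
          replace hq : q ∈ (imSet (Lminus H))^[k+1] ({0} : Set _) := hq
          rw [Function.iterate_succ_apply'] at hp hq ⊢
          obtain ⟨p', hp', hpp⟩ := mem_imSet_iff.mp hp
          obtain ⟨q', hq', hqq⟩ := mem_imSet_iff.mp hq
          refine mem_imSet_iff.mpr ⟨p' + q', ?_, Lminus_add hH hpp hqq⟩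
          rw [← hU] at hp' hq' ⊢
          exact U.add_mem hp' hq'
        · show (0 : EuclideanSpace ℝ (Fin n)) ∈ (imSet (Lminus H))^[k+1] ({0} : Set _)
          rw [Function.iterate_succ_apply']
          refine mem_imSet_iff.mpr ⟨0, ?_, h0⟩
          rw [← hU]; exact U.zero_mem
        · intro cc p hp
          show cc • p ∈ (imSet (Lminus H))^[k+1] ({0} : Set _)
          replace hp : p ∈ (imSet (Lminus H))^[k+1] ({0} : Set _) := hp
          rw [Function.iterate_succ_apply'] at hp ⊢
          obtain ⟨p', hp', hpp⟩ := mem_imSet_iff.mp hp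
          refine mem_imSet_iff.mpr ⟨cc • p', ?_, Lminus_smul hH cc hpp⟩
          rw [← hU] at hp' ⊢
          exact U.smul_mem cc hp'
  choose Wc hWc using hsub
  have hmono : Monotone Wc := by
    apply monotone_nat_of_le_succ
    intro k
    rw [← SetLike.coe_subset_coe, hWc, hWc]
    exact iterate_zero_subset_succ h0 k
  haveI : IsNoetherian ℝ (EuclideanSpace ℝ (Fin n)) := IsNoetherian.iff_fg.mpr inferInstance
  obtain ⟨N₀, hN₀⟩ := monotone_stabilizes_iff_noetherian.mpr inferInstance
    (⟨Wc, hmono⟩ : ℕ →o Submodule ℝ (EuclideanSpace ℝ (Fin n)))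
  have hre : reach (Lminus H) = (imSet (Lminus H))^[N₀+1] ({0} : Set _) := by
    apply Set.Subset.antisymm
    · intro v hv
      obtain ⟨ℓ, hℓ⟩ := mem_reach_iff.mp hv
      rcases le_or_gt ℓ (N₀+1) with h | h
      · exact iterate_subset_of_le h0 h hℓ
      · have e : Wc ℓ = Wc (N₀+1) :=
          (hN₀ ℓ (by omega)).symm.trans (hN₀ (N₀+1) (by omega))
        rw [← hWc, ← e, hWc]
        exact hℓ
    · intro v hv
      exact mem_reach_iff.mpr ⟨N₀+1, hv⟩
  exact ⟨N₀+1, by omega, hre, Wc (N₀+1), by rw [hWc, ← hre]⟩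

end Aux

/-- H is reachable iff R(H) = ℝⁿ. -/
theorem reachable_iff_reach_univ {n : ℕ} (H : SVMap n) (hH : IsConvexProcess H)
    (hdom : dom H + reach (Lminus H) = Set.univ) :
    IsReachable H ↔ reach H = Set.univ := by
  constructor
  · -- forward direction
    intro hre
    obtain ⟨N, hN1, hRN, W, hW⟩ := exists_stab hH
    -- choice functions for the decomposition and steps
    have hdec : ∀ v : EuclideanSpace ℝ (Fin n), ∃ d s y : EuclideanSpace ℝ (Fin n),
        d + s = v ∧ s ∈ reach (Lminus H) ∧ y ∈ H d := by
      intro v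
      have hv : v ∈ dom H + reach (Lminus H) := by rw [hdom]; trivial
      obtain ⟨d, hd, s, hs, hds⟩ := Set.mem_add.mp hv
      obtain ⟨y, hy⟩ := hd
      exact ⟨d, s, y, hds, hs, hy⟩
    choose d s y hds hsR hyH using hdec
    apply Set.eq_univ_of_univ_subset
    intro ξ _
    -- pseudo-trajectory x with corrections r
    set x : ℕ → EuclideanSpace ℝ (Fin n) :=
      fun k => Nat.rec (motive := fun _ => EuclideanSpace ℝ (Fin n)) ξ (fun _ xk => y xk) k
      with hxdef
    have hx0 : x 0 = ξ := rfl
    set r : ℕ → EuclideanSpace ℝ (Fin n) := fun k => -(s (x k)) with hrdef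
    have hstep : ∀ k, x (k+1) ∈ H (x k + r k) := by
      intro k
      have hd' : d (x k) = x k - s (x k) := by
        rw [eq_sub_iff_add_eq]; exact hds (x k)
      have : x k + r k = d (x k) := by
        rw [hrdef, hd']; abel
      rw [this]
      exact hyH (x k)
    have hrR : ∀ k, r k ∈ reach (Lminus H) := by
      intro k
      rw [← hW]
      have h1 : s (x k) ∈ W := by rw [← hW] at hsR; exact hsR (x k)
      exact W.neg_mem h1
    have hrN : ∀ k, r k ∈ (imSet (Lminus H))^[N] ({0} : Set (EuclideanSpace ℝ (Fin n))) :=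
      fun k => hRN ▸ hrR k
    -- chains delivering r m at time m
    choose z hz0 hzN hzs using fun m => exists_chain N (r m) (hrN m)
    set a : ℕ → ℕ → EuclideanSpace ℝ (Fin n) := fun m t => z m ((t + N) - m) with hadef
    set c : ℕ → EuclideanSpace ℝ (Fin n) :=
      fun j => ∑ m ∈ Finset.Ico j (j + N), a m j with hcdef
    -- the key pair membership
    have hpair : ∀ j, (c (j+1)) ∈ Lminus H (c j - r j) := by
      intro j
      have e2 : a j j = r j := by
        show z j ((j + N) - j) = r j
        rw [Nat.add_sub_cancel_left]
        exact hzN j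
      have e1 : c j - r j = ∑ m ∈ Finset.Ico (j+1) (j + N), a m j := by
        rw [hcdef]
        simp only []
        rw [Finset.sum_eq_sum_Ico_succ_bot (by omega) (fun m => a m j), e2]
        abel
      have e3 : c (j+1) = (∑ m ∈ Finset.Ico (j+1) (j + N), a m (j+1)) + a (j + N) (j+1) := by
        rw [hcdef]
        simp only []
        rw [show j + 1 + N = (j + N) + 1 by omega,
          Finset.sum_Ico_succ_top (by omega) (fun m => a m (j+1))]
      have hmemsum : (∑ m ∈ Finset.Ico (j+1) (j + N), a m j,
          ∑ m ∈ Finset.Ico (j+1) (j + N), a m (j+1)) ∈ linSubmodule hH := by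
        have heq : (∑ m ∈ Finset.Ico (j+1) (j + N), a m j,
            ∑ m ∈ Finset.Ico (j+1) (j + N), a m (j+1)) =
            ∑ m ∈ Finset.Ico (j+1) (j + N), (a m j, a m (j+1)) := by
          rw [Prod.ext_iff]
          constructor
          · simp [Prod.fst_sum]
          · simp [Prod.snd_sum]
        rw [heq]
        apply Submodule.sum_mem
        intro m hm
        simp only [Finset.mem_Ico] at hm
        have h1 : (j + 1 + N) - m = ((j + N) - m) + 1 := by omega
        have h2 : (j + N) - m < N := by omega
        show (z m ((j + N) - m), z m ((j + 1 + N) - m)) ∈ linSubmodule hH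
        rw [h1]
        exact hzs m _ h2
      have hmemlast : ((0 : EuclideanSpace ℝ (Fin n)), a (j + N) (j+1)) ∈ linSubmodule hH := by
        show ((0 : EuclideanSpace ℝ (Fin n)), z (j + N) ((j + 1 + N) - (j + N))) ∈
          linSubmodule hH
        rw [show (j + 1 + N) - (j + N) = 1 by omega, ← hz0 (j + N)]
        exact hzs (j + N) 0 (by omega)
      have hsum := (linSubmodule hH).add_mem hmemsum hmemlast
      have heq2 : (∑ m ∈ Finset.Ico (j+1) (j + N), a m j,
            ∑ m ∈ Finset.Ico (j+1) (j + N), a m (j+1)) +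
            ((0 : EuclideanSpace ℝ (Fin n)), a (j + N) (j+1)) =
          (c j - r j, c (j+1)) := by
        rw [Prod.ext_iff]
        constructor
        · show (∑ m ∈ Finset.Ico (j+1) (j + N), a m j) + 0 = c j - r j
          rw [e1, add_zero]
        · show (∑ m ∈ Finset.Ico (j+1) (j + N), a m (j+1)) + a (j + N) (j+1) = c (j+1)
          rw [e3]
      rw [heq2] at hsum
      exact hsum
    -- the corrected genuine trajectory
    set w : ℕ → EuclideanSpace ℝ (Fin n) := fun j => x j + c j with hwdef
    have hwstep : ∀ j, w (j+1) ∈ H (w j) := by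
      intro j
      have h1 : x (j+1) ∈ H (x j + r j) := hstep j
      have h2 : c (j+1) ∈ H (c j - r j) := (hpair j).1
      have h3 := mem_H_add hH h1 h2
      have heq : (x j + r j) + (c j - r j) = w j := by rw [hwdef]; abel
      rwa [heq] at h3
    have hwfeas : w 0 ∈ feas H := ⟨w, rfl, hwstep⟩
    obtain ⟨ℓ, hℓ⟩ := mem_reach_iff.mp (hre hwfeas)
    -- c 0 lies in R₋
    have hc0 : c 0 ∈ W := by
      rw [hcdef]
      simp only []
      apply Submodule.sum_mem
      intro m hm
      have h5 : (0 + N) - m ≤ N := by omega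
      have h6 := chain_mem_iterate (hz0 m) (hzs m) _ h5
      have h7 : a m 0 ∈ (imSet (Lminus H))^[N] ({0} : Set (EuclideanSpace ℝ (Fin n))) :=
        iterate_subset_of_le (zero_mem_Lminus hH) h5 h6
      show a m 0 ∈ W
      rw [← SetLike.mem_coe, hW, hRN]
      exact h7
    have hneg : -(c 0) ∈ (imSet (Lminus H))^[max ℓ N] ({0} : Set (EuclideanSpace ℝ (Fin n))) := by
      have h8 : -(c 0) ∈ W := W.neg_mem hc0
      rw [← SetLike.mem_coe, hW, hRN] at h8
      exact iterate_subset_of_le (zero_mem_Lminus hH) (le_max_right _ _) h8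
    have hwm : w 0 ∈ (imSet H)^[max ℓ N] ({0} : Set (EuclideanSpace ℝ (Fin n))) :=
      iterate_subset_of_le (zero_mem_H_zero hH) (le_max_left _ _) hℓ
    have hfin := iterate_add_lin hH (max ℓ N) (w 0) hwm (-(c 0)) hneg
    have hξ : w 0 + -(c 0) = ξ := by rw [hwdef]; simp only [hx0]; abel
    rw [hξ] at hfin
    exact mem_reach_iff.mpr ⟨max ℓ N, hfin⟩
  · intro h
    rw [IsReachable, h]
    exact Set.subset_univ _


end ConvexProcessPaper
end
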